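/- Let H = ⋃_n H_n be a countable increasing union of compact Hausdorff topological groups with the direct limit topology, where each H_n is a closed subgroup of H_{n+1}. If H itself is not compact (i.e. the union does not stabilize), then H is not locally compact, provided each H_n is nowhere dense in H_{n+1}. -/

import Mathlib

/-- Let `H = ⋃ n, K n` be a countable increasing union of compact
Hausdorff subgroups (each closed in the next) carrying the direct limit topology.
If the union does not stabilize and each `K n` is nowhere dense in `K (n+1)`, then
`H` is not locally compact. -/
theorem not_locallyCompact_of_directLimit (H : Type*) [TopologicalSpace H] [Group H]
    [IsTopologicalGroup H] [T2Space H] (K : ℕ → Subgroup H) (hmono : Monotone K)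
    (hcompact : ∀ n, IsCompact (K n : Set H))
    (hclosed : ∀ n, IsClosed (Subtype.val ⁻¹' (K n : Set H) : Set (K (n + 1) : Set H)))
    (hunion : ∀ x : H, ∃ n, x ∈ K n)
    (hdirlim : ∀ U : Set H, IsOpen U ↔ ∀ n, IsOpen (Subtype.val ⁻¹' U : Set (K n : Set H)))
    (hproper : ∀ n, (K n : Set H) ≠ Set.univ)
    (hnwd : ∀ n, interior (Subtype.val ⁻¹' (K n : Set H) : Set (K (n + 1) : Set H)) = ∅) :
    ¬ LocallyCompactSpace H := by
  intro hlc
  -- a compact neighborhood of 1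
  obtain ⟨C, hCnhds, _, hCcomp⟩ :=
    hlc.local_compact_nhds (1 : H) Set.univ Filter.univ_mem
  -- Step 1: every subset of H which meets each K n in a finite set is closed
  have key_closed : ∀ S : Set H, (∀ n, (S ∩ (K n : Set H)).Finite) → IsClosed S := by
    intro S hS
    rw [← isOpen_compl_iff, hdirlim]
    intro n
    rw [Set.preimage_compl, isOpen_compl_iff]
    have heq : (Subtype.val ⁻¹' S : Set (K n : Set H)) =
        Subtype.val ⁻¹' (S ∩ (K n : Set H)) := by
      ext y; simp [y.2]
    rw [heq]
    exact ((hS n).preimage Subtype.val_injective.injOn).isClosed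
  -- Step 2: C is contained in some K N
  have hCsub : ∃ N, C ⊆ (K N : Set H) := by
    by_contra hcon
    push_neg at hcon
    choose x hxC hxK using fun n => Set.not_subset.mp (hcon n)
    set S := Set.range x with hSdef
    have hSfin : ∀ n, (S ∩ (K n : Set H)).Finite := by
      intro n
      apply Set.Finite.subset ((Set.finite_Iio n).image x)
      rintro y ⟨⟨m, rfl⟩, hy⟩
      refine ⟨m, ?_, rfl⟩
      by_contra hm
      exact hxK m (hmono (le_of_not_gt hm) hy)
    have hSclosed := key_closed S hSfin
    -- every subset of S is closed, so S is discrete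
    have hdisc : DiscreteTopology S := by
      rw [discreteTopology_iff_forall_isClosed]
      intro s
      have himg : IsClosed (Subtype.val '' s : Set H) := by
        apply key_closed
        intro n
        exact (hSfin n).subset (by rintro y ⟨⟨z, hz, rfl⟩, hy⟩; exact ⟨z.2, hy⟩)
      have := himg.preimage (continuous_subtype_val : Continuous (Subtype.val : S → H))
      rwa [Set.preimage_image_eq s Subtype.val_injective] at this
    have hScomp : IsCompact S :=
      hCcomp.of_isClosed_subset hSclosed (Set.range_subset_iff.mpr hxC)
    have hfin : S.Finite := hScomp.finite (isDiscrete_iff_discreteTopology.mpr hdisc)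
    -- finite range: all x n lie in some K M
    obtain ⟨M, hM⟩ : ∃ M, ∀ n, x n ∈ K M := by
      choose f hf using hunion
      refine ⟨hfin.toFinset.sup f, fun n => ?_⟩
      have hmem : x n ∈ hfin.toFinset := hfin.mem_toFinset.mpr ⟨n, rfl⟩
      exact hmono (Finset.le_sup hmem) (hf (x n))
    exact hxK M (hM M)
  obtain ⟨N, hN⟩ := hCsub
  -- Step 3: interior of K N in K (N+1) is nonempty — contradiction with hnwd
  have h1 : (1 : H) ∈ interior C := mem_interior_iff_mem_nhds.mpr hCnhds
  have hopen : IsOpen (Subtype.val ⁻¹' interior C : Set (K (N + 1) : Set H)) :=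
    (hdirlim _).mp isOpen_interior (N + 1)
  have hsub2 : (Subtype.val ⁻¹' interior C : Set (K (N + 1) : Set H)) ⊆
      Subtype.val ⁻¹' (K N : Set H) := fun y hy => hN (interior_subset hy)
  have hne : (⟨1, (K (N + 1)).one_mem⟩ : (K (N + 1) : Set H)) ∈
      (Subtype.val ⁻¹' interior C : Set (K (N + 1) : Set H)) := h1
  have : (⟨1, (K (N + 1)).one_mem⟩ : (K (N + 1) : Set H)) ∈
      interior (Subtype.val ⁻¹' (K N : Set H) : Set (K (N + 1) : Set H)) :=
    interior_maximal hsub2 hopen hne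
  rw [hnwd N] at this
  exact this
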